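/- Optimality on the trimmed instance: Let G' be a (possibly non-complete) correlation clustering instance obtained from the complete signed instance G by deleting (making neutral) every + edge whose endpoints lie in different connected components of G̃. Assuming that for every connected component CC of G̃ no partition of CC into two or more clusters has smaller cost than keeping CC whole, the clustering whose clusters are exactly the connected components of G̃ is an optimal solution for the instance G'. -/

import Mathlib

open Finset Classical

noncomputable section

variable {V : Type*} [Fintype V] [DecidableEq V]

/-- Closed neighborhood of `v` in `G` (each vertex is its own neighbor). -/
def closedNbhd (G : SimpleGraph V) (v : V) : Finset V :=
  insert v (G.neighborFinset v)

/-- Min-disagree correlation clustering cost of the clustering `c`, restricted to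
pairs of vertices inside `S`, for the complete signed instance whose `+` edges are
the edges of `G` (all other pairs are `−`): number of `+` edges inside `S` cut by
`c` plus number of `−` pairs inside `S` not cut by `c`. -/
def costOn (G : SimpleGraph V) (S : Finset V) {κ : Type*} (c : V → κ) : ℕ :=
  ((S ×ˢ S).filter (fun p : V × V => p.1 ≠ p.2 ∧
    ((G.Adj p.1 p.2 ∧ c p.1 ≠ c p.2) ∨ (¬ G.Adj p.1 p.2 ∧ c p.1 = c p.2)))).card / 2

/-- Number of `+` edges inside `S` cut by the clustering `c`. -/
def cutCount (G : SimpleGraph V) (S : Finset V) {κ : Type*} (c : V → κ) : ℕ :=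
  ((S ×ˢ S).filter (fun p : V × V => G.Adj p.1 p.2 ∧ c p.1 ≠ c p.2)).card / 2

/-- Number of `−` pairs (non-adjacent pairs of distinct vertices) inside `S`. -/
def minusCount (G : SimpleGraph V) (S : Finset V) : ℕ :=
  ((S ×ˢ S).filter (fun p : V × V => p.1 ≠ p.2 ∧ ¬ G.Adj p.1 p.2)).card / 2

/-- Min-disagree cost for a (possibly non-complete) signed instance with `+`
graph `P` and `−` graph `M` (pairs adjacent in neither are neutral): the number
of `+` edges cut by `c` plus the number of `−` edges inside clusters of `c`. -/
def costI (P M : SimpleGraph V) {κ : Type*} (c : V → κ) : ℕ :=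
  ((Finset.univ ×ˢ Finset.univ).filter (fun p : V × V => p.1 ≠ p.2 ∧
    ((P.Adj p.1 p.2 ∧ c p.1 ≠ c p.2) ∨ (M.Adj p.1 p.2 ∧ c p.1 = c p.2)))).card / 2

/-- The `+` edge graph of the trimmed instance `G'`: keep only the `+` edges of
`G` whose endpoints lie in the same connected component of `G̃`. -/
def trimmedPlus (G Gt : SimpleGraph V) : SimpleGraph V where
  Adj u v := G.Adj u v ∧ Gt.connectedComponentMk u = Gt.connectedComponentMk v
  symm := ⟨fun _ _ h => ⟨h.1.symm, h.2.symm⟩⟩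
  loopless := ⟨fun a h => G.loopless.irrefl a h.1⟩

/- auxiliary -/
lemma trimmedPlus_adj (G Gt : SimpleGraph V) (u v : V) :
    (trimmedPlus G Gt).Adj u v ↔
      G.Adj u v ∧ Gt.connectedComponentMk u = Gt.connectedComponentMk v := Iff.rfl

def instSet (P M : SimpleGraph V) {κ : Type*} (c : V → κ) : Finset (V × V) :=
  (Finset.univ ×ˢ Finset.univ).filter (fun p : V × V => p.1 ≠ p.2 ∧
    ((P.Adj p.1 p.2 ∧ c p.1 ≠ c p.2) ∨ (M.Adj p.1 p.2 ∧ c p.1 = c p.2)))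

lemma costI_eq (P M : SimpleGraph V) {κ : Type*} (c : V → κ) :
    costI P M c = (instSet P M c).card / 2 := rfl

def onSet (G : SimpleGraph V) (S : Finset V) {κ : Type*} (c : V → κ) : Finset (V × V) :=
  (S ×ˢ S).filter (fun p : V × V => p.1 ≠ p.2 ∧
    ((G.Adj p.1 p.2 ∧ c p.1 ≠ c p.2) ∨ (¬ G.Adj p.1 p.2 ∧ c p.1 = c p.2)))

lemma costOn_eq (G : SimpleGraph V) (S : Finset V) {κ : Type*} (c : V → κ) :
    costOn G S c = (onSet G S c).card / 2 := rfl

lemma even_card_of_swap {s : Finset (V × V)}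
    (hs : ∀ p ∈ s, Prod.swap p ∈ s) (hd : ∀ p ∈ s, p.1 ≠ p.2) : Even s.card := by
  classical
  let e := Fintype.equivFin V
  have hsplit : s = s.filter (fun p => e p.1 < e p.2) ∪ s.filter (fun p => e p.2 < e p.1) := by
    ext p
    simp only [mem_union, mem_filter]
    constructor
    · intro hp
      have : e p.1 ≠ e p.2 := fun h => hd p hp (e.injective h)
      rcases this.lt_or_gt with h | h
      · exact Or.inl ⟨hp, h⟩
      · exact Or.inr ⟨hp, h⟩
    · rintro (⟨hp, _⟩ | ⟨hp, _⟩) <;> exact hp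
  have hdisj : Disjoint (s.filter (fun p => e p.1 < e p.2))
      (s.filter (fun p => e p.2 < e p.1)) := by
    rw [disjoint_left]
    intro p h1 h2
    simp only [mem_filter] at h1 h2
    exact absurd h2.2 (not_lt.mpr h1.2.le)
  have hcard : (s.filter (fun p => e p.1 < e p.2)).card
      = (s.filter (fun p => e p.2 < e p.1)).card := by
    apply Finset.card_bij (fun p _ => Prod.swap p)
    · intro p hp
      simp only [mem_filter] at hp ⊢
      exact ⟨hs p hp.1, hp.2⟩
    · intro a _ b _ h
      exact Prod.swap_injective h
    · intro b hb
      simp only [mem_filter] at hb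
      exact ⟨Prod.swap b, by simp [mem_filter, hs b hb.1, hb.2], by simp⟩
  rw [hsplit, card_union_of_disjoint hdisj, ← hcard]
  exact ⟨_, rfl⟩

/-- optimality on the trimmed instance: let `G̃` be a subgraph of
the `+` graph `G`, and `G'` the instance obtained from the complete instance `G`
by making neutral every `+` edge joining different components of `G̃`. If for
every connected component of `G̃` no partition into two or more clusters beats
keeping it whole, then clustering by the connected components of `G̃` is optimal
for `G'`. -/
theorem stmt12 (G Gt : SimpleGraph V) (hsub : Gt ≤ G)
    (hcomp : ∀ K : Gt.ConnectedComponent, ∀ (κ : Type) (c : V → κ),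
      costOn G (Finset.univ.filter (fun x => Gt.connectedComponentMk x = K))
          (fun _ => (0 : ℕ))
        ≤ costOn G (Finset.univ.filter (fun x => Gt.connectedComponentMk x = K)) c) :
    ∀ (κ : Type) (c : V → κ),
      costI (trimmedPlus G Gt) Gᶜ (Gt.connectedComponentMk)
        ≤ costI (trimmedPlus G Gt) Gᶜ c := by
  classical
  intro κ c
  rw [costI_eq, costI_eq]
  apply Nat.div_le_div_right
  have cm := Gt.connectedComponentMk
  set T : Gt.ConnectedComponent → Finset V :=
    fun K => Finset.univ.filter (fun x => Gt.connectedComponentMk x = K) with hT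
  -- Step 1: decompose the LHS set by components
  have hAcard : (instSet (trimmedPlus G Gt) Gᶜ (Gt.connectedComponentMk)).card
      = ∑ K : Gt.ConnectedComponent, (onSet G (T K) (fun _ : V => (0 : ℕ))).card := by
    rw [Finset.card_eq_sum_card_fiberwise
      (f := fun p : V × V => Gt.connectedComponentMk p.1) (t := Finset.univ)
      (fun p _ => mem_univ _)]
    apply Finset.sum_congr rfl
    intro K _
    congr 1
    ext ⟨u, v⟩
    simp only [instSet, onSet, hT, mem_filter, mem_product, mem_univ, true_and,
      trimmedPlus_adj, SimpleGraph.compl_adj]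
    constructor
    · rintro ⟨⟨hne, hor⟩, hK⟩
      rcases hor with ⟨⟨_, heq⟩, hne'⟩ | ⟨⟨_, hnadj⟩, heq⟩
      · exact absurd heq hne'
      · exact ⟨⟨hK, heq ▸ hK⟩, hne, Or.inr ⟨hnadj, trivial⟩⟩
    · rintro ⟨⟨hK1, hK2⟩, hne, hor⟩
      rcases hor with ⟨_, h0⟩ | ⟨hnadj, _⟩
      · exact absurd rfl h0
      · exact ⟨⟨hne, Or.inr ⟨⟨hne, hnadj⟩, hK1.trans hK2.symm⟩⟩, hK1⟩
  -- Step 2: the RHS set dominates the per-component sets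
  have hBcard : ∑ K : Gt.ConnectedComponent, (onSet G (T K) c).card
      ≤ (instSet (trimmedPlus G Gt) Gᶜ c).card := by
    rw [Finset.card_eq_sum_card_fiberwise
      (f := fun p : V × V => Gt.connectedComponentMk p.1) (t := Finset.univ)
      (fun p _ => mem_univ _) (s := instSet (trimmedPlus G Gt) Gᶜ c)]
    apply Finset.sum_le_sum
    intro K _
    apply Finset.card_le_card
    intro ⟨u, v⟩ hp
    simp only [onSet, hT, mem_filter, mem_product, mem_univ, true_and] at hp
    obtain ⟨⟨hK1, hK2⟩, hne, hor⟩ := hp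
    simp only [instSet, mem_filter, mem_product, mem_univ, true_and,
      trimmedPlus_adj, SimpleGraph.compl_adj]
    refine ⟨⟨hne, ?_⟩, hK1⟩
    rcases hor with ⟨hadj, hcne⟩ | ⟨hnadj, hceq⟩
    · exact Or.inl ⟨⟨hadj, hK1.trans hK2.symm⟩, hcne⟩
    · exact Or.inr ⟨⟨hne, hnadj⟩, hceq⟩
  -- Step 3: per-component comparison
  have hKle : ∀ K : Gt.ConnectedComponent,
      (onSet G (T K) (fun _ : V => (0 : ℕ))).card ≤ (onSet G (T K) c).card := by
    intro K
    have hdiv : (onSet G (T K) (fun _ : V => (0:ℕ))).card / 2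
        ≤ (onSet G (T K) c).card / 2 := hcomp K κ c
    have heven : Even (onSet G (T K) (fun _ : V => (0 : ℕ))).card := by
      apply even_card_of_swap
      · intro ⟨u, v⟩ hp
        simp only [onSet, mem_filter, mem_product] at hp ⊢
        obtain ⟨⟨h1, h2⟩, hne, hor⟩ := hp
        refine ⟨⟨h2, h1⟩, hne.symm, ?_⟩
        rcases hor with ⟨hadj, h⟩ | ⟨hnadj, h⟩
        · exact Or.inl ⟨hadj.symm, fun h' => h h'.symm⟩
        · exact Or.inr ⟨fun h' => hnadj h'.symm, trivial⟩
      · intro p hp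
        simp only [onSet, mem_filter] at hp
        exact hp.2.1
    rw [Nat.even_iff] at heven
    have h2 : (onSet G (T K) c).card / 2 * 2 ≤ (onSet G (T K) c).card :=
      Nat.div_mul_le_self _ 2
    omega
  calc (instSet (trimmedPlus G Gt) Gᶜ (Gt.connectedComponentMk)).card
      = ∑ K : Gt.ConnectedComponent, (onSet G (T K) (fun _ : V => (0 : ℕ))).card := hAcard
    _ ≤ ∑ K : Gt.ConnectedComponent, (onSet G (T K) c).card :=
        Finset.sum_le_sum (fun K _ => hKle K)
    _ ≤ (instSet (trimmedPlus G Gt) Gᶜ c).card := hBcard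

end
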